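/- For ν > 0 and X_ν ~ Poi(ν), one has E√(X_ν + 1) ≤ √(ν + 1) and E√(X_ν) ≥ ν/√(ν + 1), where the expectations are E√(X_ν + 1) = ∑_{k∈ℕ} √(k+1) · exp(−ν) ν^k / k! and E√(X_ν) = ∑_{k∈ℕ} √k · exp(−ν) ν^k / k!. -/

import Mathlib

private lemma exp_tsum (x : ℝ) : ∑' n : ℕ, x ^ n / n.factorial = Real.exp x := by
  rw [Real.exp_eq_exp_ℝ, NormedSpace.exp_eq_tsum_div]

private lemma sqrt_le_aux (a b : ℝ) (ha : 0 ≤ a) (hb : 0 < b) :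
    Real.sqrt a ≤ (a + b) / (2 * Real.sqrt b) := by
  set t := Real.sqrt a with ht
  set s := Real.sqrt b with hs
  have hs0 : 0 < s := Real.sqrt_pos.mpr hb
  have ht0 : 0 ≤ t := Real.sqrt_nonneg a
  have ha' : a = t ^ 2 := (Real.sq_sqrt ha).symm
  have hb' : b = s ^ 2 := (Real.sq_sqrt hb.le).symm
  rw [ha', hb', le_div_iff₀ (by positivity)]
  nlinarith [sq_nonneg (t - s)]

private lemma inv_sqrt_aux (a b : ℝ) (ha : 0 < a) (hb : 0 < b) :
    1 / Real.sqrt b - (a - b) / (2 * b * Real.sqrt b) ≤ 1 / Real.sqrt a := by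
  set t := Real.sqrt a with ht
  set s := Real.sqrt b with hs
  have hs0 : 0 < s := Real.sqrt_pos.mpr hb
  have ht0 : 0 < t := Real.sqrt_pos.mpr ha
  have ha' : a = t ^ 2 := (Real.sq_sqrt ha.le).symm
  have hb' : b = s ^ 2 := (Real.sq_sqrt hb.le).symm
  have key : 1 / t - (1 / s - (t ^ 2 - s ^ 2) / (2 * s ^ 2 * s))
      = (t - s) ^ 2 * (t + 2 * s) / (2 * s ^ 2 * s * t) := by
    field_simp
    ring
  have h2 : 0 ≤ (t - s) ^ 2 * (t + 2 * s) / (2 * s ^ 2 * s * t) := by positivity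
  rw [ha', hb']
  linarith [key ▸ h2]

/-- For `X_ν ~ Poi(ν)` with `ν > 0`, `E√(X_ν + 1) ≤ √(ν+1)` and
`E√(X_ν) ≥ ν/√(ν+1)`. -/
theorem poisson_sqrt_mean_bounds (ν : ℝ) (hν : 0 < ν) :
    (∑' k : ℕ, Real.sqrt ((k : ℝ) + 1) * (Real.exp (-ν) * ν ^ k / k.factorial)
        ≤ Real.sqrt (ν + 1)) ∧
    (ν / Real.sqrt (ν + 1)
        ≤ ∑' k : ℕ, Real.sqrt k * (Real.exp (-ν) * ν ^ k / k.factorial)) := by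
  set p : ℕ → ℝ := fun k => Real.exp (-ν) * ν ^ k / k.factorial with hp
  have hp_nonneg : ∀ k, 0 ≤ p k := fun k => by positivity
  have hp_eq : ∀ k, p k = Real.exp (-ν) * (ν ^ k / k.factorial) := fun k => by
    simp [hp, mul_div_assoc]
  have hp_summable : Summable p :=
    ((Real.summable_pow_div_factorial ν).mul_left (Real.exp (-ν))).congr
      fun k => (hp_eq k).symm
  have hp_tsum : ∑' k, p k = 1 := by
    rw [tsum_congr hp_eq, tsum_mul_left, exp_tsum, ← Real.exp_add]
    simp
  have hkp_shift : ∀ k : ℕ, ((k + 1 : ℕ) : ℝ) * p (k + 1) = ν * p k := by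
    intro k
    have hfac : ((k + 1).factorial : ℝ) = (k + 1 : ℝ) * k.factorial := by
      rw [Nat.factorial_succ]; push_cast; ring
    have hf0 : (k.factorial : ℝ) ≠ 0 := Nat.cast_ne_zero.mpr k.factorial_ne_zero
    rw [hp_eq, hp_eq, hfac, pow_succ]
    push_cast
    field_simp
  have hkp_summable : Summable (fun k : ℕ => (k : ℝ) * p k) := by
    rw [← summable_nat_add_iff 1]
    exact (hp_summable.mul_left ν).congr fun k => (hkp_shift k).symm
  have hkp_tsum : ∑' k : ℕ, (k : ℝ) * p k = ν := by
    rw [Summable.tsum_eq_zero_add hkp_summable]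
    simp only [Nat.cast_zero, zero_mul, zero_add]
    rw [tsum_congr hkp_shift, tsum_mul_left, hp_tsum, mul_one]
  set s := Real.sqrt (ν + 1) with hsdef
  have hs0 : 0 < s := Real.sqrt_pos.mpr (by linarith)
  have hs2 : s ^ 2 = ν + 1 := Real.sq_sqrt (by linarith)
  -- Part 1
  have part1 : ∑' k : ℕ, Real.sqrt ((k : ℝ) + 1) * p k ≤ s := by
    set g : ℕ → ℝ := fun k => (1 / (2 * s)) * ((k : ℝ) * p k) + ((ν + 2) / (2 * s)) * p k
      with hg
    have hg_summable : Summable g :=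
      (hkp_summable.mul_left _).add (hp_summable.mul_left _)
    have hle : ∀ k : ℕ, Real.sqrt ((k : ℝ) + 1) * p k ≤ g k := by
      intro k
      have h1 : Real.sqrt ((k : ℝ) + 1) ≤ (((k : ℝ) + 1) + (ν + 1)) / (2 * s) :=
        sqrt_le_aux _ _ (by positivity) (by linarith)
      have h2 : (((k : ℝ) + 1) + (ν + 1)) / (2 * s) * p k = g k := by
        simp only [hg]; field_simp; ring
      calc Real.sqrt ((k : ℝ) + 1) * p k ≤ (((k : ℝ) + 1) + (ν + 1)) / (2 * s) * p k :=
            mul_le_mul_of_nonneg_right h1 (hp_nonneg k)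
        _ = g k := h2
    have hf_summable : Summable (fun k : ℕ => Real.sqrt ((k : ℝ) + 1) * p k) :=
      Summable.of_nonneg_of_le (fun k => by positivity) hle hg_summable
    calc ∑' k : ℕ, Real.sqrt ((k : ℝ) + 1) * p k ≤ ∑' k, g k :=
          Summable.tsum_le_tsum hle hf_summable hg_summable
      _ = (1 / (2 * s)) * ν + ((ν + 2) / (2 * s)) * 1 := by
          rw [hg, Summable.tsum_add (hkp_summable.mul_left _) (hp_summable.mul_left _),
            tsum_mul_left, tsum_mul_left, hkp_tsum, hp_tsum]
      _ = s := by
          have h3 : (1 / (2 * s)) * ν + ((ν + 2) / (2 * s)) * 1 = (ν + 1) / s := by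
            field_simp; ring
          rw [h3, hsdef, Real.div_sqrt]
  -- Part 2
  have part2 : ν / s ≤ ∑' k : ℕ, Real.sqrt k * p k := by
    have hterm : ∀ k : ℕ, Real.sqrt ((k : ℝ) + 1) * p (k + 1)
        = ν * (1 / Real.sqrt ((k : ℝ) + 1)) * p k := by
      intro k
      have h1 : ((k + 1 : ℕ) : ℝ) * p (k + 1) = ν * p k := hkp_shift k
      push_cast at h1
      have hsk : Real.sqrt ((k : ℝ) + 1) ^ 2 = (k : ℝ) + 1 :=
        Real.sq_sqrt (by positivity)
      have hsk0 : (0 : ℝ) < Real.sqrt ((k : ℝ) + 1) := Real.sqrt_pos.mpr (by positivity)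
      have h2 : Real.sqrt ((k : ℝ) + 1) = ((k : ℝ) + 1) / Real.sqrt ((k : ℝ) + 1) := by
        field_simp
        exact hsk
      rw [h2, div_mul_eq_mul_div, h1]
      field_simp
      rw [hsk]
    set q : ℕ → ℝ := fun k => ν * (1 / Real.sqrt ((k : ℝ) + 1)) * p k with hq
    have hq_nonneg : ∀ k, 0 ≤ q k := fun k => by positivity
    have hq_le : ∀ k : ℕ, q k ≤ ν * p k := by
      intro k
      have hsk0 : (0 : ℝ) < Real.sqrt ((k : ℝ) + 1) := Real.sqrt_pos.mpr (by positivity)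
      have h1 : 1 / Real.sqrt ((k : ℝ) + 1) ≤ 1 := by
        rw [div_le_one hsk0, show (1:ℝ) = Real.sqrt 1 by simp]
        exact Real.sqrt_le_sqrt (by simp [Nat.cast_nonneg])
      calc q k = (1 / Real.sqrt ((k : ℝ) + 1)) * (ν * p k) := by rw [hq]; ring
        _ ≤ 1 * (ν * p k) := mul_le_mul_of_nonneg_right h1 (by positivity)
        _ = ν * p k := one_mul _
    have hq_summable : Summable q :=
      Summable.of_nonneg_of_le hq_nonneg hq_le (hp_summable.mul_left ν)
    have hterm' : ∀ k : ℕ, Real.sqrt ((k + 1 : ℕ) : ℝ) * p (k + 1) = q k := by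
      intro k; push_cast; exact hterm k
    have hf_summable : Summable (fun k : ℕ => Real.sqrt k * p k) := by
      rw [← summable_nat_add_iff 1]
      exact hq_summable.congr fun k => (hterm' k).symm
    have htsum_shift : ∑' k : ℕ, Real.sqrt k * p k = ∑' k, q k := by
      rw [Summable.tsum_eq_zero_add hf_summable]
      simp only [Nat.cast_zero, Real.sqrt_zero, zero_mul, zero_add]
      exact tsum_congr hterm'
    set L : ℕ → ℝ := fun k => ν * ((1 / s + ν / (2 * (ν + 1) * s)) * p k
      - (1 / (2 * (ν + 1) * s)) * ((k : ℝ) * p k)) with hL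
    have hL_summable : Summable L :=
      Summable.mul_left _ ((hp_summable.mul_left _).sub (hkp_summable.mul_left _))
    have hL_le : ∀ k : ℕ, L k ≤ q k := by
      intro k
      have htan : 1 / s - (((k : ℝ) + 1) - (ν + 1)) / (2 * (ν + 1) * s)
          ≤ 1 / Real.sqrt ((k : ℝ) + 1) := by
        rw [hsdef]
        exact inv_sqrt_aux ((k : ℝ) + 1) (ν + 1) (by positivity) (by linarith)
      have hcoef : L k = ν * ((1 / s - (((k : ℝ) + 1) - (ν + 1)) / (2 * (ν + 1) * s)) * p k) := by
        rw [hL]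
        field_simp
        try ring
        try tauto
      rw [hcoef, hq]
      have h5 : (1 / s - (((k : ℝ) + 1) - (ν + 1)) / (2 * (ν + 1) * s)) * p k
          ≤ (1 / Real.sqrt ((k : ℝ) + 1)) * p k :=
        mul_le_mul_of_nonneg_right htan (hp_nonneg k)
      calc ν * ((1 / s - (((k : ℝ) + 1) - (ν + 1)) / (2 * (ν + 1) * s)) * p k)
          ≤ ν * ((1 / Real.sqrt ((k : ℝ) + 1)) * p k) :=
            mul_le_mul_of_nonneg_left h5 hν.le
        _ = ν * (1 / Real.sqrt ((k : ℝ) + 1)) * p k := by ring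
    have htsum_L : ∑' k, L k = ν / s := by
      rw [hL, tsum_mul_left,
        Summable.tsum_sub (hp_summable.mul_left _) (hkp_summable.mul_left _),
        tsum_mul_left, tsum_mul_left, hp_tsum, hkp_tsum]
      field_simp
      ring
    calc ν / s = ∑' k, L k := htsum_L.symm
      _ ≤ ∑' k, q k := Summable.tsum_le_tsum hL_le hL_summable hq_summable
      _ = ∑' k : ℕ, Real.sqrt k * p k := htsum_shift.symm
  exact ⟨part1, part2⟩
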